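/- For every constant c₁ > 0 there exists a constant C > 0 such that for all v, w ∈ ℝ²: ∫_{ℝ²} exp( −(c₁/2)|v−u|² − c₁·(|v−w|² − |u−w|²)²/|v−u|² ) du ≤ C/(1+|v−w|), where the integral is taken over u ≠ v. -/

import Mathlib

open MeasureTheory Real Set

namespace GaussianGainAux

lemma integrable_exp_neg_abs0 {β : ℝ} (hβ : 0 < β) :
    Integrable (fun x : ℝ => Real.exp (-(β * |x|))) := by
  have h1 : IntegrableOn (fun x : ℝ => Real.exp (-(β * |x|))) (Ioi 0) := by
    refine (exp_neg_integrableOn_Ioi 0 hβ).congr_fun (fun x hx => ?_) measurableSet_Ioi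
    rw [abs_of_pos hx]; simp only [neg_mul]
  have h1' : IntegrableOn (fun x : ℝ => Real.exp (-(β * |x|))) (Ici 0) :=
    Iff.mpr integrableOn_Ici_iff_integrableOn_Ioi h1
  have h2 : IntegrableOn (fun x : ℝ => Real.exp (-(β * |x|))) (Iic 0) := by
    rw [IntegrableOn, ← Measure.map_neg_eq_self (volume : Measure ℝ)]
    have m : MeasurableEmbedding fun x : ℝ => -x := (Homeomorph.neg ℝ).measurableEmbedding
    rw [Measure.restrict_map m.measurable (by exact measurableSet_Iic)]
    rw [m.integrable_map_iff]
    simp only [Function.comp_def, abs_neg, neg_preimage, neg_Iic, neg_zero]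
    exact h1'
  have : IntegrableOn (fun x : ℝ => Real.exp (-(β * |x|))) (Iic 0 ∪ Ioi 0) := h2.union h1
  rwa [Iic_union_Ioi, integrableOn_univ] at this

lemma integrable_exp_neg_abs {β : ℝ} (hβ : 0 < β) (m : ℝ) :
    Integrable (fun x : ℝ => Real.exp (-(β * |x - m|))) :=
  (integrable_exp_neg_abs0 hβ).comp_sub_right m

lemma integral_exp_neg_abs {β : ℝ} (hβ : 0 < β) (m : ℝ) :
    ∫ x : ℝ, Real.exp (-(β * |x - m|)) = 2 / β := by
  rw [integral_sub_right_eq_self (fun x : ℝ => Real.exp (-(β * |x|))) m]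
  rw [integral_comp_abs (f := fun x : ℝ => Real.exp (-(β * x)))]
  rw [integral_comp_mul_left_Ioi (fun t => Real.exp (-t)) 0 hβ]
  simp [integral_exp_neg_Ioi, integral_exp_Iic_zero]
  field_simp

lemma key1d' (a b q c v₁ : ℝ) (ha : 0 ≤ a) (hb : 0 < b) (hq : q ≠ 0) :
    ∫ x : ℝ, Real.exp (-(a * (x - v₁) ^ 2 + b * |(x - v₁) * q + c|)) ≤ 2 / (b * |q|) := by
  have hbq : 0 < b * |q| := mul_pos hb (abs_pos.mpr hq)
  set m : ℝ := v₁ - c / q with hm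
  have key : ∀ x : ℝ, Real.exp (-(a * (x - v₁) ^ 2 + b * |(x - v₁) * q + c|))
      ≤ Real.exp (-(b * |q| * |x - m|)) := by
    intro x
    apply Real.exp_le_exp.mpr
    have habs : |(x - v₁) * q + c| = |q| * |x - m| := by
      rw [← abs_mul]
      congr 1
      rw [hm]; field_simp
      ring
    have : 0 ≤ a * (x - v₁) ^ 2 := mul_nonneg ha (sq_nonneg _)
    rw [habs]; nlinarith [abs_nonneg (x - m)]
  calc ∫ x : ℝ, Real.exp (-(a * (x - v₁) ^ 2 + b * |(x - v₁) * q + c|))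
      ≤ ∫ x : ℝ, Real.exp (-(b * |q| * |x - m|)) := by
        refine integral_mono_of_nonneg (ae_of_all _ fun x => (Real.exp_pos _).le)
          (integrable_exp_neg_abs hbq m) (ae_of_all _ key)
    _ = 2 / (b * |q|) := integral_exp_neg_abs hbq m

lemma gauss1d_integrable {a : ℝ} (ha : 0 < a) (v₁ : ℝ) :
    Integrable (fun x : ℝ => Real.exp (-a * (x - v₁) ^ 2)) :=
  (integrable_exp_neg_mul_sq ha).comp_sub_right v₁

lemma gauss1d_integral {a : ℝ} (ha : 0 < a) (v₁ : ℝ) :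
    ∫ x : ℝ, Real.exp (-a * (x - v₁) ^ 2) = Real.sqrt (π / a) := by
  rw [integral_sub_right_eq_self (fun x : ℝ => Real.exp (-a * x ^ 2)) v₁]
  exact integral_gaussian a

lemma keyProd_integrable (a b q₁ q₂ v₁ v₂ : ℝ) (ha : 0 < a) (hb : 0 < b) :
    Integrable (fun u : ℝ × ℝ =>
      Real.exp (-(a * ((u.1 - v₁) ^ 2 + (u.2 - v₂) ^ 2)
        + b * |(u.1 - v₁) * q₁ + (u.2 - v₂) * q₂|))) := by
  have hP : Integrable (fun u : ℝ × ℝ =>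
      Real.exp (-a * (u.1 - v₁) ^ 2) * Real.exp (-a * (u.2 - v₂) ^ 2)) := by
    rw [show (volume : Measure (ℝ × ℝ)) = (volume : Measure ℝ).prod volume
      from Measure.volume_eq_prod ℝ ℝ]
    exact (gauss1d_integrable ha v₁).mul_prod (gauss1d_integrable ha v₂)
  refine hP.mono' ?_ (ae_of_all _ fun u => ?_)
  · apply Continuous.aestronglyMeasurable; fun_prop
  · rw [Real.norm_eq_abs, abs_of_pos (Real.exp_pos _), ← Real.exp_add]
    apply Real.exp_le_exp.mpr
    have h1 : 0 ≤ b * |(u.1 - v₁) * q₁ + (u.2 - v₂) * q₂| := mul_nonneg hb.le (abs_nonneg _)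
    nlinarith [sq_nonneg (u.1 - v₁), sq_nonneg (u.2 - v₂)]

lemma keyProd (a b q₁ q₂ v₁ v₂ : ℝ) (ha : 0 < a) (hb : 0 < b) (hq : q₁ ≠ 0) :
    ∫ u : ℝ × ℝ, Real.exp (-(a * ((u.1 - v₁) ^ 2 + (u.2 - v₂) ^ 2)
        + b * |(u.1 - v₁) * q₁ + (u.2 - v₂) * q₂|))
      ≤ 2 / (b * |q₁|) * Real.sqrt (π / a) := by
  have hg := keyProd_integrable a b q₁ q₂ v₁ v₂ ha hb
  rw [show (volume : Measure (ℝ × ℝ)) = (volume : Measure ℝ).prod volume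
    from Measure.volume_eq_prod ℝ ℝ]
  rw [show (volume : Measure (ℝ × ℝ)) = (volume : Measure ℝ).prod volume
    from Measure.volume_eq_prod ℝ ℝ] at hg
  rw [integral_prod_symm _ hg]
  have inner_bound : ∀ y : ℝ,
      (∫ x : ℝ, Real.exp (-(a * ((x - v₁) ^ 2 + (y - v₂) ^ 2)
        + b * |(x - v₁) * q₁ + (y - v₂) * q₂|)))
      ≤ Real.exp (-a * (y - v₂) ^ 2) * (2 / (b * |q₁|)) := by
    intro y
    have hsplit : ∀ x : ℝ, Real.exp (-(a * ((x - v₁) ^ 2 + (y - v₂) ^ 2)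
        + b * |(x - v₁) * q₁ + (y - v₂) * q₂|))
        = Real.exp (-a * (y - v₂) ^ 2) *
          Real.exp (-(a * (x - v₁) ^ 2 + b * |(x - v₁) * q₁ + (y - v₂) * q₂|)) := by
      intro x; rw [← Real.exp_add]; ring_nf
    simp_rw [hsplit]
    rw [integral_const_mul]
    exact mul_le_mul_of_nonneg_left (key1d' a b q₁ ((y - v₂) * q₂) v₁ ha.le hb hq)
      (Real.exp_pos _).le
  calc (∫ y : ℝ, ∫ x : ℝ, Real.exp (-(a * (((x, y).1 - v₁) ^ 2 + ((x, y).2 - v₂) ^ 2)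
        + b * |((x, y).1 - v₁) * q₁ + ((x, y).2 - v₂) * q₂|)))
      ≤ ∫ y : ℝ, Real.exp (-a * (y - v₂) ^ 2) * (2 / (b * |q₁|)) := by
        refine integral_mono_of_nonneg (ae_of_all _ fun y =>
          integral_nonneg fun x => (Real.exp_pos _).le)
          ((gauss1d_integrable ha v₂).mul_const _) (ae_of_all _ fun y => inner_bound y)
    _ = 2 / (b * |q₁|) * Real.sqrt (π / a) := by
        rw [integral_mul_const, gauss1d_integral ha v₂, mul_comm]

lemma keyProd₂ (a b q₁ q₂ v₁ v₂ : ℝ) (ha : 0 < a) (hb : 0 < b) (hq : q₂ ≠ 0) :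
    ∫ u : ℝ × ℝ, Real.exp (-(a * ((u.1 - v₁) ^ 2 + (u.2 - v₂) ^ 2)
        + b * |(u.1 - v₁) * q₁ + (u.2 - v₂) * q₂|))
      ≤ 2 / (b * |q₂|) * Real.sqrt (π / a) := by
  have hg := keyProd_integrable a b q₁ q₂ v₁ v₂ ha hb
  rw [show (volume : Measure (ℝ × ℝ)) = (volume : Measure ℝ).prod volume
    from Measure.volume_eq_prod ℝ ℝ]
  rw [show (volume : Measure (ℝ × ℝ)) = (volume : Measure ℝ).prod volume
    from Measure.volume_eq_prod ℝ ℝ] at hg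
  rw [integral_prod _ hg]
  have inner_bound : ∀ x : ℝ,
      (∫ y : ℝ, Real.exp (-(a * ((x - v₁) ^ 2 + (y - v₂) ^ 2)
        + b * |(x - v₁) * q₁ + (y - v₂) * q₂|)))
      ≤ Real.exp (-a * (x - v₁) ^ 2) * (2 / (b * |q₂|)) := by
    intro x
    have hsplit : ∀ y : ℝ, Real.exp (-(a * ((x - v₁) ^ 2 + (y - v₂) ^ 2)
        + b * |(x - v₁) * q₁ + (y - v₂) * q₂|))
        = Real.exp (-a * (x - v₁) ^ 2) *
          Real.exp (-(a * (y - v₂) ^ 2 + b * |(y - v₂) * q₂ + (x - v₁) * q₁|)) := by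
      intro y
      rw [← Real.exp_add, show (x - v₁) * q₁ + (y - v₂) * q₂ = (y - v₂) * q₂ + (x - v₁) * q₁
        from by ring]
      ring_nf
    simp_rw [hsplit]
    rw [integral_const_mul]
    exact mul_le_mul_of_nonneg_left (key1d' a b q₂ ((x - v₁) * q₁) v₂ ha.le hb hq)
      (Real.exp_pos _).le
  calc (∫ x : ℝ, ∫ y : ℝ, Real.exp (-(a * (((x, y).1 - v₁) ^ 2 + ((x, y).2 - v₂) ^ 2)
        + b * |((x, y).1 - v₁) * q₁ + ((x, y).2 - v₂) * q₂|)))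
      ≤ ∫ x : ℝ, Real.exp (-a * (x - v₁) ^ 2) * (2 / (b * |q₂|)) := by
        refine integral_mono_of_nonneg (ae_of_all _ fun x =>
          integral_nonneg fun y => (Real.exp_pos _).le)
          ((gauss1d_integrable ha v₁).mul_const _) (ae_of_all _ fun x => inner_bound x)
    _ = 2 / (b * |q₂|) * Real.sqrt (π / a) := by
        rw [integral_mul_const, gauss1d_integral ha v₁, mul_comm]

lemma keyConst (a b q₁ q₂ v₁ v₂ : ℝ) (ha : 0 < a) (hb : 0 < b) :
    ∫ u : ℝ × ℝ, Real.exp (-(a * ((u.1 - v₁) ^ 2 + (u.2 - v₂) ^ 2)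
        + b * |(u.1 - v₁) * q₁ + (u.2 - v₂) * q₂|))
      ≤ Real.sqrt (π / a) * Real.sqrt (π / a) := by
  have hP : Integrable (fun u : ℝ × ℝ =>
      Real.exp (-a * (u.1 - v₁) ^ 2) * Real.exp (-a * (u.2 - v₂) ^ 2)) := by
    rw [show (volume : Measure (ℝ × ℝ)) = (volume : Measure ℝ).prod volume
      from Measure.volume_eq_prod ℝ ℝ]
    exact (gauss1d_integrable ha v₁).mul_prod (gauss1d_integrable ha v₂)
  calc ∫ u : ℝ × ℝ, Real.exp (-(a * ((u.1 - v₁) ^ 2 + (u.2 - v₂) ^ 2)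
        + b * |(u.1 - v₁) * q₁ + (u.2 - v₂) * q₂|))
      ≤ ∫ u : ℝ × ℝ, Real.exp (-a * (u.1 - v₁) ^ 2) * Real.exp (-a * (u.2 - v₂) ^ 2) := by
        refine integral_mono_of_nonneg (ae_of_all _ fun u => (Real.exp_pos _).le) hP
          (ae_of_all _ fun u => ?_)
        dsimp only
        rw [← Real.exp_add]
        apply Real.exp_le_exp.mpr
        have h1 : 0 ≤ b * |(u.1 - v₁) * q₁ + (u.2 - v₂) * q₂| :=
          mul_nonneg hb.le (abs_nonneg _)
        nlinarith [sq_nonneg (u.1 - v₁), sq_nonneg (u.2 - v₂)]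
    _ = Real.sqrt (π / a) * Real.sqrt (π / a) := by
        rw [show (volume : Measure (ℝ × ℝ)) = (volume : Measure ℝ).prod volume
          from Measure.volume_eq_prod ℝ ℝ]
        rw [integral_prod_mul (fun x : ℝ => Real.exp (-a * (x - v₁) ^ 2))
          (fun y : ℝ => Real.exp (-a * (y - v₂) ^ 2)),
          gauss1d_integral ha v₁, gauss1d_integral ha v₂]

lemma pointwise_bound (c₁ : ℝ) (hc₁ : 0 < c₁) (S P : ℝ) (hP : 0 < P) :
    -(c₁ / 2) * P - c₁ * (2 * S - P) ^ 2 / P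
      ≤ -(c₁ / 4 * P + 2 * c₁ / 5 * |S|) := by
  have h2 : c₁ / 4 * P + 2 * c₁ / 5 * |S| - c₁ / 2 * P ≤ c₁ * (2 * S - P) ^ 2 / P := by
    rw [le_div_iff₀ hP]
    have h1 : 2 * |S| - P ≤ |2 * S - P| := by
      have := abs_sub_abs_le_abs_sub (2 * S) P
      rw [abs_of_pos hP, abs_mul, abs_two] at this
      linarith
    have hM2 : c₁ * |2 * S - P| ^ 2 = c₁ * (2 * S - P) ^ 2 := by rw [sq_abs]
    nlinarith [hM2, mul_nonneg hc₁.le (sq_nonneg (|2 * S - P| - P / 10)),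
      mul_le_mul_of_nonneg_left (mul_le_mul_of_nonneg_right h1 hP.le) hc₁.le,
      mul_pos hc₁ (pow_pos hP 2), sq_abs (2 * S - P), abs_nonneg (2 * S - P), abs_nonneg S]
  linarith

end GaussianGainAux

open GaussianGainAux

set_option maxHeartbeats 1000000 in
/-- Core Gaussian integral estimate from Appendix 6.3 (proof of Lemma 4.1). -/
theorem gaussian_gain_kernel_integral_estimate
    (c₁ : ℝ) (hc₁ : 0 < c₁) :
    ∃ C > 0, ∀ v w : ℝ × ℝ,
      (∫ u in {u : ℝ × ℝ | u ≠ v},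
          Real.exp (-(c₁ / 2) * ((v.1 - u.1) ^ 2 + (v.2 - u.2) ^ 2) -
            c₁ * (((v.1 - w.1) ^ 2 + (v.2 - w.2) ^ 2) -
                ((u.1 - w.1) ^ 2 + (u.2 - w.2) ^ 2)) ^ 2 /
              ((v.1 - u.1) ^ 2 + (v.2 - u.2) ^ 2))) ≤
        C / (1 + Real.sqrt ((v.1 - w.1) ^ 2 + (v.2 - w.2) ^ 2)) := by
  set a : ℝ := c₁ / 4 with ha_def
  set b : ℝ := 2 * c₁ / 5 with hb_def
  have ha : 0 < a := by positivity
  have hb : 0 < b := by positivity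
  have hs : 0 < Real.sqrt (π / a) := Real.sqrt_pos.mpr (by positivity)
  set K₀ : ℝ := Real.sqrt (π / a) * Real.sqrt (π / a) with hK₀_def
  set K₁ : ℝ := 2 * Real.sqrt 2 / b * Real.sqrt (π / a) with hK₁_def
  have hK₀ : 0 < K₀ := by positivity
  have hK₁ : 0 < K₁ := by positivity
  refine ⟨2 * K₀ + 2 * K₁, by positivity, fun v w => ?_⟩
  set q₁ : ℝ := w.1 - v.1 with hq₁_def
  set q₂ : ℝ := w.2 - v.2 with hq₂_def
  set r : ℝ := Real.sqrt ((v.1 - w.1) ^ 2 + (v.2 - w.2) ^ 2) with hr_def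
  have hr0 : 0 ≤ r := Real.sqrt_nonneg _
  have hr2 : r ^ 2 = q₁ ^ 2 + q₂ ^ 2 := by
    rw [hr_def, Real.sq_sqrt (by positivity)]; ring
  have h1r : 0 < 1 + r := by linarith
  -- the dominating function
  set g : ℝ × ℝ → ℝ := fun u =>
    Real.exp (-(a * ((u.1 - v.1) ^ 2 + (u.2 - v.2) ^ 2)
      + b * |(u.1 - v.1) * q₁ + (u.2 - v.2) * q₂|)) with hg_def
  have hgi := keyProd_integrable a b q₁ q₂ v.1 v.2 ha hb
  -- Step 1: the set integral is at most ∫ g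
  have step1 : (∫ u in {u : ℝ × ℝ | u ≠ v},
      Real.exp (-(c₁ / 2) * ((v.1 - u.1) ^ 2 + (v.2 - u.2) ^ 2) -
        c₁ * (((v.1 - w.1) ^ 2 + (v.2 - w.2) ^ 2) -
            ((u.1 - w.1) ^ 2 + (u.2 - w.2) ^ 2)) ^ 2 /
          ((v.1 - u.1) ^ 2 + (v.2 - u.2) ^ 2))) ≤ ∫ u : ℝ × ℝ, g u := by
    have hmeas : MeasurableSet {u : ℝ × ℝ | u ≠ v} :=
      (measurableSet_singleton v).compl
    have hbound : ∀ u : ℝ × ℝ, u ∈ {u : ℝ × ℝ | u ≠ v} →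
        Real.exp (-(c₁ / 2) * ((v.1 - u.1) ^ 2 + (v.2 - u.2) ^ 2) -
          c₁ * (((v.1 - w.1) ^ 2 + (v.2 - w.2) ^ 2) -
              ((u.1 - w.1) ^ 2 + (u.2 - w.2) ^ 2)) ^ 2 /
            ((v.1 - u.1) ^ 2 + (v.2 - u.2) ^ 2)) ≤ g u := by
      intro u hu
      have hne : u ≠ v := hu
      have hP : 0 < (v.1 - u.1) ^ 2 + (v.2 - u.2) ^ 2 := by
        rcases (not_and_or.mp (fun h => hne (Prod.ext_iff.mpr h))) with h | h
        · have h' : v.1 - u.1 ≠ 0 := sub_ne_zero.mpr (Ne.symm h)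
          have : 0 < (v.1 - u.1) ^ 2 := lt_of_le_of_ne (sq_nonneg _) (Ne.symm (pow_ne_zero 2 h'))
          nlinarith [sq_nonneg (v.2 - u.2)]
        · have h' : v.2 - u.2 ≠ 0 := sub_ne_zero.mpr (Ne.symm h)
          have : 0 < (v.2 - u.2) ^ 2 := lt_of_le_of_ne (sq_nonneg _) (Ne.symm (pow_ne_zero 2 h'))
          nlinarith [sq_nonneg (v.1 - u.1)]
      rw [hg_def]
      apply Real.exp_le_exp.mpr
      have hPeq : (u.1 - v.1) ^ 2 + (u.2 - v.2) ^ 2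
          = (v.1 - u.1) ^ 2 + (v.2 - u.2) ^ 2 := by ring
      have hDeq : ((v.1 - w.1) ^ 2 + (v.2 - w.2) ^ 2) -
          ((u.1 - w.1) ^ 2 + (u.2 - w.2) ^ 2)
          = 2 * ((u.1 - v.1) * q₁ + (u.2 - v.2) * q₂)
            - ((v.1 - u.1) ^ 2 + (v.2 - u.2) ^ 2) := by
        rw [hq₁_def, hq₂_def]; ring
      rw [hPeq, hDeq]
      exact pointwise_bound c₁ hc₁ _ _ hP
    calc (∫ u in {u : ℝ × ℝ | u ≠ v},
        Real.exp (-(c₁ / 2) * ((v.1 - u.1) ^ 2 + (v.2 - u.2) ^ 2) -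
          c₁ * (((v.1 - w.1) ^ 2 + (v.2 - w.2) ^ 2) -
              ((u.1 - w.1) ^ 2 + (u.2 - w.2) ^ 2)) ^ 2 /
            ((v.1 - u.1) ^ 2 + (v.2 - u.2) ^ 2)))
        ≤ ∫ u in {u : ℝ × ℝ | u ≠ v}, g u := by
          refine integral_mono_of_nonneg (ae_of_all _ fun u => (Real.exp_pos _).le)
            hgi.integrableOn ?_
          exact (ae_restrict_iff' hmeas).mpr (ae_of_all _ hbound)
      _ ≤ ∫ u : ℝ × ℝ, g u :=
          setIntegral_le_integral hgi (ae_of_all _ fun u => (Real.exp_pos _).le)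
  -- Case split on r
  rcases le_or_gt r 1 with hr1 | hr1
  · -- small r : use constant bound
    have step2 : (∫ u : ℝ × ℝ, g u) ≤ K₀ := keyConst a b q₁ q₂ v.1 v.2 ha hb
    refine le_trans (le_trans step1 step2) ?_
    rw [le_div_iff₀ h1r]
    nlinarith
  · -- large r
    have hrpos : 0 < r := by linarith
    have decay : (∫ u : ℝ × ℝ, g u) ≤ K₁ / r := by
      rcases le_total (q₂ ^ 2) (q₁ ^ 2) with hcase | hcase
      · have hq₁ne : q₁ ≠ 0 := by
          intro h0
          rw [h0] at hcase
          simp at hcase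
          nlinarith
        have hle : r ≤ Real.sqrt 2 * |q₁| := by
          have h2q : r ^ 2 ≤ 2 * q₁ ^ 2 := by nlinarith
          calc r = Real.sqrt (r ^ 2) := (Real.sqrt_sq hr0).symm
            _ ≤ Real.sqrt (2 * q₁ ^ 2) := Real.sqrt_le_sqrt h2q
            _ = Real.sqrt 2 * |q₁| := by
                rw [Real.sqrt_mul (by norm_num : (0:ℝ) ≤ 2), Real.sqrt_sq_eq_abs]
        have hbq : 0 < b * |q₁| := mul_pos hb (abs_pos.mpr hq₁ne)
        have hstep : 2 / (b * |q₁|) ≤ 2 * Real.sqrt 2 / (b * r) := by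
          rw [div_le_div_iff₀ hbq (by positivity)]
          have h2b := mul_le_mul_of_nonneg_left hle (by positivity : (0:ℝ) ≤ 2 * b)
          linarith [h2b]
        calc (∫ u : ℝ × ℝ, g u) ≤ 2 / (b * |q₁|) * Real.sqrt (π / a) :=
              keyProd a b q₁ q₂ v.1 v.2 ha hb hq₁ne
          _ ≤ 2 * Real.sqrt 2 / (b * r) * Real.sqrt (π / a) :=
              mul_le_mul_of_nonneg_right hstep hs.le
          _ = K₁ / r := by rw [hK₁_def]; field_simp
      · have hq₂ne : q₂ ≠ 0 := by
          intro h0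
          rw [h0] at hcase
          simp at hcase
          nlinarith
        have hle : r ≤ Real.sqrt 2 * |q₂| := by
          have h2q : r ^ 2 ≤ 2 * q₂ ^ 2 := by nlinarith
          calc r = Real.sqrt (r ^ 2) := (Real.sqrt_sq hr0).symm
            _ ≤ Real.sqrt (2 * q₂ ^ 2) := Real.sqrt_le_sqrt h2q
            _ = Real.sqrt 2 * |q₂| := by
                rw [Real.sqrt_mul (by norm_num : (0:ℝ) ≤ 2), Real.sqrt_sq_eq_abs]
        have hbq : 0 < b * |q₂| := mul_pos hb (abs_pos.mpr hq₂ne)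
        have hstep : 2 / (b * |q₂|) ≤ 2 * Real.sqrt 2 / (b * r) := by
          rw [div_le_div_iff₀ hbq (by positivity)]
          have h2b := mul_le_mul_of_nonneg_left hle (by positivity : (0:ℝ) ≤ 2 * b)
          linarith [h2b]
        calc (∫ u : ℝ × ℝ, g u) ≤ 2 / (b * |q₂|) * Real.sqrt (π / a) :=
              keyProd₂ a b q₁ q₂ v.1 v.2 ha hb hq₂ne
          _ ≤ 2 * Real.sqrt 2 / (b * r) * Real.sqrt (π / a) :=
              mul_le_mul_of_nonneg_right hstep hs.le
          _ = K₁ / r := by rw [hK₁_def]; field_simp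
    refine le_trans (le_trans step1 decay) ?_
    rw [div_le_div_iff₀ hrpos h1r]
    nlinarith [mul_lt_mul_of_pos_left hr1 hK₁, mul_pos hK₀ hrpos]
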